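/- Let G be a group, A ⊆ G finite nonempty, and suppose H = Stab^A_η(A) := {x ∈ G : |Ax △ A| ≤ η|A|} is a subgroup with η ≤ 1. If there exist C ⊆ G finite with A ⊆ C·H, and for every g ∈ C either |gH ∩ A| < (η/|C|)|H| or |gH \ A| < (η/|C|)|H|, then there is D ⊆ C with |A △ D·H| < η|H| ≤ η|A·A⁻¹| (in particular |A △ DH| < η|H|). -/

import Mathlib

open Finset Pointwise

/-- If H = Stab^A_η(A) is a subgroup (η ≤ 1), A ⊆ CH, and each coset gH (g ∈ C) meets
A in fewer than (η/|C|)|H| points or misses it up to fewer than (η/|C|)|H| points,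
then there is D ⊆ C with |A △ DH| < η|H| ≤ η|AA⁻¹|. -/
theorem stmt18 {G : Type*} [Group G] [DecidableEq G] (A : Finset G) (hA : A.Nonempty)
    (η : ℝ) (hη0 : 0 < η) (hη1 : η ≤ 1) (H : Subgroup G)
    (hH : (H : Set G) = {x : G | ((symmDiff (A * {x}) A).card : ℝ) ≤ η * (A.card : ℝ)})
    (C : Finset G) (hcover : (A : Set G) ⊆ (C : Set G) * (H : Set G))
    (hreg : ∀ g ∈ C,
      (((fun h => g * h) '' (H : Set G) ∩ (A : Set G)).ncard : ℝ)
          < (η / (C.card : ℝ)) * (Nat.card H : ℝ) ∨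
      (((fun h => g * h) '' (H : Set G) \ (A : Set G)).ncard : ℝ)
          < (η / (C.card : ℝ)) * (Nat.card H : ℝ)) :
    ∃ D : Finset G, D ⊆ C ∧
      ((symmDiff (A : Set G) ((D : Set G) * (H : Set G))).ncard : ℝ) < η * (Nat.card H : ℝ) ∧
      η * (Nat.card H : ℝ) ≤ η * ((A * A⁻¹).card : ℝ) := by
  classical
  have hk1 : (1:ℝ) ≤ (A.card : ℝ) := by exact_mod_cast hA.card_pos
  have hmemH : ∀ x : G, x ∈ H ↔ ((symmDiff (A * {x}) A).card : ℝ) ≤ η * (A.card : ℝ) := by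
    intro x
    rw [← SetLike.mem_coe, hH]; rfl
  have hsd : ∀ x : G, (symmDiff (A * {x}) A).card = ((A * {x}) \ A).card + (A \ (A * {x})).card := by
    intro x
    rw [symmDiff_def]
    exact card_union_of_disjoint disjoint_sdiff_sdiff
  have hinterlb : ∀ x : G, x ∈ H → (A.card : ℝ) / 2 ≤ (((A * {x}) ∩ A).card : ℝ) := by
    intro x hx
    have h1 := card_inter_add_card_sdiff (A * {x}) A
    have h2 := card_inter_add_card_sdiff A (A * {x})
    have h3 : (A ∩ (A * {x})).card = ((A * {x}) ∩ A).card := by rw [inter_comm]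
    have h4 : (A * {x}).card = A.card := card_mul_singleton A x
    have h5 := (hmemH x).1 hx
    rw [hsd x] at h5
    have h6 : η * (A.card : ℝ) ≤ (A.card : ℝ) := by nlinarith
    push_cast at h5
    rw [h3] at h2
    have h1' : ((A * {x} ∩ A).card : ℝ) + (((A * {x}) \ A).card : ℝ) = (A.card : ℝ) := by
      rw [← h4]; exact_mod_cast h1
    have h2' : ((A * {x} ∩ A).card : ℝ) + ((A \ (A * {x})).card : ℝ) = (A.card : ℝ) := by
      exact_mod_cast h2
    linarith
  have hHsub : (H : Set G) ⊆ ↑(A⁻¹ * A) := by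
    intro x hx
    have hlb := hinterlb x hx
    have hne : ((A * {x}) ∩ A).Nonempty := by
      rw [← Finset.card_pos]
      have : (0:ℝ) < (((A * {x}) ∩ A).card : ℝ) := by linarith
      exact_mod_cast this
    obtain ⟨y, hy⟩ := hne
    rw [mem_inter] at hy
    obtain ⟨hy1, hy2⟩ := hy
    rw [Finset.mem_mul] at hy1
    obtain ⟨a, ha, b, hb, hab⟩ := hy1
    rw [Finset.mem_singleton] at hb
    have hxx : x = a⁻¹ * y := by rw [← hab, hb]; group
    rw [Finset.coe_mul]
    exact ⟨a⁻¹, by simpa using ha, y, hy2, by rw [hxx]⟩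
  have hfin : (H : Set G).Finite := Set.Finite.subset (A⁻¹ * A).finite_toSet hHsub
  set Hf : Finset G := hfin.toFinset with hHfdef
  have hHfcoe : (Hf : Set G) = (H : Set G) := hfin.coe_toFinset
  have hmemF : ∀ x : G, x ∈ Hf ↔ x ∈ H := by
    intro x
    rw [← Finset.mem_coe, hHfcoe, SetLike.mem_coe]
  have hcardH : Nat.card H = Hf.card := by
    have h0 : Nat.card H = Nat.card (H : Set G) := rfl
    rw [h0, Nat.card_coe_set_eq, ← hHfcoe, Set.ncard_coe_finset]
  have honeF : (1 : G) ∈ Hf := (hmemF 1).2 (one_mem H)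
  have hHfpos : (1:ℝ) ≤ (Hf.card : ℝ) := by
    exact_mod_cast Finset.card_pos.2 ⟨1, honeF⟩
  have hcoset : ∀ g : G, (fun h => g * h) '' (H : Set G) = ((g • Hf : Finset G) : Set G) := by
    intro g
    rw [← hHfcoe, Finset.coe_smul_finset]
    ext x
    constructor
    · rintro ⟨y, hy, rfl⟩; exact ⟨y, hy, rfl⟩
    · rintro ⟨y, hy, rfl⟩; exact ⟨y, hy, rfl⟩
  obtain ⟨a0, ha0⟩ := hA
  have hCne : C.Nonempty := by
    obtain ⟨c, hc, h, -, -⟩ := Set.mem_mul.1 (hcover ha0)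
    exact ⟨c, hc⟩
  have hCpos : (0:ℝ) < (C.card : ℝ) := by exact_mod_cast hCne.card_pos
  set ε : ℝ := η / (C.card : ℝ) * (Hf.card : ℝ) with hεdef
  have hreg' : ∀ g ∈ C, (((g • Hf ∩ A).card : ℝ) < ε ∨ ((g • Hf \ A).card : ℝ) < ε) := by
    intro g hg
    have h := hreg g hg
    rw [hcoset g, hcardH] at h
    rw [← Finset.coe_inter, ← Finset.coe_sdiff, Set.ncard_coe_finset, Set.ncard_coe_finset] at h
    exact h
  have hcover' : A ⊆ C * Hf := by
    rw [← Finset.coe_subset, Finset.coe_mul, hHfcoe]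
    exact hcover
  set D : Finset G := C.filter (fun g => ε ≤ ((g • Hf ∩ A).card : ℝ)) with hDdef
  have hDC : D ⊆ C := filter_subset _ _
  have key1 : A \ (D * Hf) ⊆ (C \ D).biUnion (fun g => g • Hf ∩ A) := by
    intro x hx
    rw [mem_sdiff] at hx
    obtain ⟨hxA, hxD⟩ := hx
    obtain ⟨c, hc, h, hh, rfl⟩ := Finset.mem_mul.1 (hcover' hxA)
    have hcD : c ∉ D := fun hcD => hxD (Finset.mul_mem_mul hcD hh)
    rw [mem_biUnion]
    exact ⟨c, mem_sdiff.2 ⟨hc, hcD⟩, mem_inter.2 ⟨mem_smul_finset.2 ⟨h, hh, rfl⟩, hxA⟩⟩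
  have key2 : (D * Hf) \ A ⊆ D.biUnion (fun g => g • Hf \ A) := by
    intro x hx
    rw [mem_sdiff] at hx
    obtain ⟨hxD, hxA⟩ := hx
    obtain ⟨c, hc, h, hh, rfl⟩ := Finset.mem_mul.1 hxD
    rw [mem_biUnion]
    exact ⟨c, hc, mem_sdiff.2 ⟨mem_smul_finset.2 ⟨h, hh, rfl⟩, hxA⟩⟩
  have hsplit : (symmDiff A (D * Hf)).card = (A \ (D * Hf)).card + ((D * Hf) \ A).card := by
    rw [symmDiff_def]
    exact card_union_of_disjoint disjoint_sdiff_sdiff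
  have hb1 : (A \ (D * Hf)).card ≤ ∑ g ∈ C \ D, (g • Hf ∩ A).card :=
    le_trans (card_le_card key1) card_biUnion_le
  have hb2 : ((D * Hf) \ A).card ≤ ∑ g ∈ D, (g • Hf \ A).card :=
    le_trans (card_le_card key2) card_biUnion_le
  set f : G → ℝ := fun g => if g ∈ D then ((g • Hf \ A).card : ℝ) else ((g • Hf ∩ A).card : ℝ)
    with hfdef
  have hsum_split : (∑ g ∈ C \ D, ((g • Hf ∩ A).card : ℝ)) + ∑ g ∈ D, ((g • Hf \ A).card : ℝ)
      = ∑ g ∈ C, f g := by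
    rw [← Finset.sum_sdiff hDC]
    congr 1
    · exact Finset.sum_congr rfl (fun g hg => by
        rw [mem_sdiff] at hg; simp [hfdef, hg.2])
    · exact Finset.sum_congr rfl (fun g hg => by simp [hfdef, hg])
  have hflt : ∀ g ∈ C, f g < ε := by
    intro g hg
    by_cases hgD : g ∈ D
    · have h1 : ε ≤ ((g • Hf ∩ A).card : ℝ) := (Finset.mem_filter.1 hgD).2
      rcases hreg' g hg with h | h
      · linarith
      · simpa [hfdef, hgD] using h
    · have h1 : ¬ ε ≤ ((g • Hf ∩ A).card : ℝ) := fun h => hgD (Finset.mem_filter.2 ⟨hg, h⟩)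
      push_neg at h1
      simpa [hfdef, hgD] using h1
  have hsumlt : ∑ g ∈ C, f g < η * (Hf.card : ℝ) := by
    calc ∑ g ∈ C, f g < ∑ _g ∈ C, ε := Finset.sum_lt_sum_of_nonempty hCne hflt
    _ = (C.card : ℝ) * ε := by rw [Finset.sum_const, nsmul_eq_mul]
    _ = η * (Hf.card : ℝ) := by rw [hεdef]; field_simp
  have hmain : ((symmDiff A (D * Hf)).card : ℝ) < η * (Hf.card : ℝ) := by
    have hle : ((symmDiff A (D * Hf)).card : ℝ)
        ≤ (∑ g ∈ C \ D, ((g • Hf ∩ A).card : ℝ)) + ∑ g ∈ D, ((g • Hf \ A).card : ℝ) := by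
      rw [hsplit]
      push_cast
      have c1 : ((A \ (D * Hf)).card : ℝ) ≤ ∑ g ∈ C \ D, ((g • Hf ∩ A).card : ℝ) := by
        rw [← Nat.cast_sum]; exact_mod_cast hb1
      have c2 : (((D * Hf) \ A).card : ℝ) ≤ ∑ g ∈ D, ((g • Hf \ A).card : ℝ) := by
        rw [← Nat.cast_sum]; exact_mod_cast hb2
      linarith
    rw [hsum_split] at hle
    linarith
  -- Part 2 : Hf.card ≤ (A * A⁻¹).card
  have e1 : ∀ x : G, ((A * {x}) ∩ A).card = (A.filter (fun a => a * x ∈ A)).card := by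
    intro x
    have himg : (A * {x}) ∩ A = (A.filter (fun a => a * x ∈ A)).image (fun a => a * x) := by
      ext y
      simp only [mem_inter, Finset.mem_mul, Finset.mem_singleton, mem_image, mem_filter]
      constructor
      · rintro ⟨⟨a, ha, b, rfl, rfl⟩, hy⟩
        exact ⟨a, ⟨ha, hy⟩, rfl⟩
      · rintro ⟨a, ⟨ha, ha2⟩, rfl⟩
        exact ⟨⟨a, ha, x, rfl, rfl⟩, ha2⟩
    rw [himg, card_image_of_injective _ (fun a b hab => by
      simpa using mul_right_cancel (hab : a * x = b * x))]
  have e2 : ∀ a : G, ((a • Hf) ∩ A).card = (Hf.filter (fun x => a * x ∈ A)).card := by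
    intro a
    have himg : (a • Hf) ∩ A = (Hf.filter (fun x => a * x ∈ A)).image (fun x => a * x) := by
      ext y
      simp only [mem_inter, mem_image, mem_filter]
      constructor
      · rintro ⟨hy1, hy2⟩
        obtain ⟨x, hx, rfl⟩ := mem_smul_finset.1 hy1
        exact ⟨x, ⟨hx, hy2⟩, rfl⟩
      · rintro ⟨x, ⟨hx, hx2⟩, rfl⟩
        exact ⟨mem_smul_finset.2 ⟨x, hx, rfl⟩, hx2⟩
    rw [himg, card_image_of_injective _ (mul_right_injective a)]
  have hsum_eq : ∑ x ∈ Hf, ((A * {x}) ∩ A).card = ∑ a ∈ A, ((a • Hf) ∩ A).card := by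
    simp only [e1, e2, Finset.card_filter]
    exact Finset.sum_comm
  have hbig : (A.card : ℝ) / 2 + (A.card : ℝ) * (Hf.card : ℝ) / 2
      ≤ ∑ x ∈ Hf, (((A * {x}) ∩ A).card : ℝ) := by
    have h1 : (((A * {(1:G)}) ∩ A).card : ℝ) = (A.card : ℝ) := by
      rw [Finset.singleton_one, mul_one, inter_self]
    have hsp := Finset.add_sum_erase Hf (fun x => (((A * {x}) ∩ A).card : ℝ)) honeF
    have hlb : ((Hf.erase 1).card : ℝ) * ((A.card : ℝ) / 2)
        ≤ ∑ x ∈ Hf.erase 1, (((A * {x}) ∩ A).card : ℝ) := by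
      have := Finset.card_nsmul_le_sum (Hf.erase 1)
        (fun x => (((A * {x}) ∩ A).card : ℝ)) ((A.card : ℝ) / 2)
        (fun x hx => hinterlb x ((hmemF x).1 (mem_of_mem_erase hx)))
      simpa [nsmul_eq_mul] using this
    have hce : ((Hf.erase 1).card : ℝ) = (Hf.card : ℝ) - 1 := by
      rw [Finset.card_erase_of_mem honeF]
      have : 1 ≤ Hf.card := by exact_mod_cast hHfpos
      push_cast [Nat.cast_sub this]
      ring
    rw [hce] at hlb
    nlinarith
  have hmax : ∃ a ∈ A, (Hf.card : ℝ) / 2 < (((a • Hf) ∩ A).card : ℝ) := by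
    by_contra hcon
    push_neg at hcon
    have hub : ∑ a ∈ A, (((a • Hf) ∩ A).card : ℝ) ≤ (A.card : ℝ) * ((Hf.card : ℝ) / 2) := by
      have := Finset.sum_le_card_nsmul A (fun a => (((a • Hf) ∩ A).card : ℝ))
        ((Hf.card : ℝ) / 2) (fun a ha => hcon a ha)
      simpa [nsmul_eq_mul] using this
    have heq : ∑ x ∈ Hf, (((A * {x}) ∩ A).card : ℝ) = ∑ a ∈ A, (((a • Hf) ∩ A).card : ℝ) := by
      rw [← Nat.cast_sum, ← Nat.cast_sum]
      exact_mod_cast hsum_eq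
    rw [heq] at hbig
    nlinarith
  obtain ⟨a, haA, haS⟩ := hmax
  set S : Finset G := a⁻¹ • ((a • Hf) ∩ A) with hSdef
  have hScard : S.card = ((a • Hf) ∩ A).card := card_smul_finset _ _
  have hS2 : Hf.card < 2 * S.card := by
    have : (Hf.card : ℝ) < 2 * (S.card : ℝ) := by rw [hScard]; linarith
    exact_mod_cast this
  have hSsub : S ⊆ Hf := by
    intro x hx
    obtain ⟨y, hy, rfl⟩ := mem_smul_finset.1 hx
    obtain ⟨hy1, _⟩ := mem_inter.1 hy
    obtain ⟨h, hh, rfl⟩ := mem_smul_finset.1 hy1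
    simpa using hh
  have hSA : ∀ s ∈ S, a * s ∈ A := by
    intro s hs
    obtain ⟨y, hy, rfl⟩ := mem_smul_finset.1 hs
    obtain ⟨_, hy2⟩ := mem_inter.1 hy
    simpa [smul_eq_mul] using hy2
  have hconj : ∀ h ∈ Hf, a * h * a⁻¹ ∈ A * A⁻¹ := by
    intro h hh
    have hhS : h • S ⊆ Hf := by
      intro x hx
      obtain ⟨s, hs, rfl⟩ := mem_smul_finset.1 hx
      exact (hmemF _).2 (mul_mem ((hmemF h).1 hh) ((hmemF s).1 (hSsub hs)))
    have hnd : ¬ Disjoint S (h • S) := by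
      intro hd
      have hcu : (S ∪ h • S).card = S.card + (h • S).card := card_union_of_disjoint hd
      have hle : (S ∪ h • S).card ≤ Hf.card := card_le_card (union_subset hSsub hhS)
      have h3 : (h • S).card = S.card := card_smul_finset h S
      omega
    obtain ⟨x, hxS, hxhS⟩ := Finset.not_disjoint_iff.1 hnd
    obtain ⟨s, hs, rfl⟩ := mem_smul_finset.1 hxhS
    have hA1 : a * (h • s) ∈ A := hSA _ hxS
    have hA2 : a * s ∈ A := hSA s hs
    refine Finset.mem_mul.2 ⟨a * (h • s), hA1, (a * s)⁻¹, ?_, ?_⟩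
    · exact Finset.inv_mem_inv hA2
    · simp only [smul_eq_mul]
      group
  have hinj : Function.Injective (fun h : G => a * h * a⁻¹) := by
    intro x y hxy
    simp only at hxy
    have := mul_right_cancel hxy
    exact mul_left_cancel this
  have hcard2 : Hf.card ≤ (A * A⁻¹).card := by
    calc Hf.card = (Hf.image (fun h => a * h * a⁻¹)).card :=
          (card_image_of_injective _ hinj).symm
    _ ≤ (A * A⁻¹).card := card_le_card (by
          intro y hy
          obtain ⟨h, hh, rfl⟩ := mem_image.1 hy
          exact hconj h hh)
  refine ⟨D, hDC, ?_, ?_⟩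
  · rw [← hHfcoe, ← Finset.coe_mul, ← Finset.coe_symmDiff, Set.ncard_coe_finset, hcardH]
    exact_mod_cast hmain
  · rw [hcardH]
    have : (Hf.card : ℝ) ≤ ((A * A⁻¹).card : ℝ) := by exact_mod_cast hcard2
    exact mul_le_mul_of_nonneg_left this hη0.le
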